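/- arXiv:1511.03236 — 3 statements merged into one kernel-verified Lean document; each statement's English description precedes it below -/
import Mathlib

section
/- Let b ≥ 2 and q ≥ 1 be integers, i an integer, k a natural number, and N a natural number with N < b^k. Then S^{(b)}_{q,i}(b^k + N) = S^{(b)}_{q,i}(b^k) − S^{(b)}_{q, i − b^k}(N). -/
/-- `A_b` membership: the base-`b` expansion of `n` uses only digits 0 and 1. -/
def inAset (b n : ℕ) : Prop := ∀ d ∈ Nat.digits b n, d ≤ 1

/-- `newmanS b q i N = Σ_{n ∈ A_b, 0 ≤ n < N, n ≡ i (mod q)} (-1)^{s_b(n)}`,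
where `s_b(n)` is the sum of the base-`b` digits of `n`. -/
def newmanS (b q : ℕ) (i : ℤ) (N : ℕ) : ℤ :=
  ∑ n ∈ Finset.range N,
    if (∀ d ∈ Nat.digits b n, d ≤ 1) ∧ (n : ℤ) % q = i % q
    then (-1 : ℤ) ^ (Nat.digits b n).sum else 0

lemma digits_pow_add (b k m : ℕ) (hb : 2 ≤ b) (hm : m < b ^ k) :
    Nat.digits b (b ^ k + m) =
      Nat.digits b m ++ List.replicate (k - (Nat.digits b m).length) 0 ++ [1] := by
  have hb1 : 1 < b := hb
  have hlen : (Nat.digits b m).length ≤ k := by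
    rcases Nat.eq_zero_or_pos m with rfl | hm0
    · simp
    · rw [Nat.digits_len b m hb1 hm0.ne']
      exact Nat.log_lt_of_lt_pow hm0.ne' hm
  have h1 : Nat.digits b 1 = [1] := by
    rw [Nat.digits_def' hb1 one_pos]
    simp [Nat.mod_eq_of_lt hb1, Nat.div_eq_of_lt hb1]
  have := Nat.digits_append_zeroes_append_digits (b := b)
    (k := k - (Nat.digits b m).length) (m := 1) (n := m) hb1 one_pos
  rw [h1, Nat.add_sub_cancel' hlen] at this
  rw [this, mul_one, add_comm]

theorem newmanS_add_pow (b q : ℕ) (hb : 2 ≤ b) (hq : 1 ≤ q) (i : ℤ) (k N : ℕ)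
    (hN : N < b ^ k) :
    newmanS b q i (b ^ k + N) =
      newmanS b q i (b ^ k) - newmanS b q (i - (b : ℤ) ^ k) N := by
  unfold newmanS
  rw [Finset.sum_range_add, sub_eq_add_neg, ← Finset.sum_neg_distrib]
  congr 1
  apply Finset.sum_congr rfl
  intro m hm
  have hmlt : m < b ^ k := lt_of_lt_of_le (Finset.mem_range.mp hm) hN.le
  have hd := digits_pow_add b k m hb hmlt
  have hsum : (Nat.digits b (b ^ k + m)).sum = (Nat.digits b m).sum + 1 := by
    simp [hd]
  have hmem : (∀ d ∈ Nat.digits b (b ^ k + m), d ≤ 1) ↔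
      (∀ d ∈ Nat.digits b m, d ≤ 1) := by
    rw [hd]
    constructor
    · intro h d hdm
      exact h d (by simp [hdm])
    · intro h d hdm
      simp only [List.mem_append, List.mem_replicate, List.mem_singleton] at hdm
      rcases hdm with (hdm | hdm) | hdm
      · exact h d hdm
      · omega
      · omega
  have hmod : ((b : ℤ) ^ k + (m : ℤ)) % q = i % q ↔
      (m : ℤ) % q = (i - (b : ℤ) ^ k) % q := by
    constructor
    · intro h
      have : ((b : ℤ) ^ k + m) - (b : ℤ) ^ k ≡ i - (b : ℤ) ^ k [ZMOD q] :=
        Int.ModEq.sub h (Int.ModEq.refl _)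
      simpa [Int.ModEq] using this
    · intro h
      have : (b : ℤ) ^ k + (m : ℤ) ≡ (b : ℤ) ^ k + (i - (b : ℤ) ^ k) [ZMOD q] :=
        Int.ModEq.add (Int.ModEq.refl _) h
      simpa [Int.ModEq] using this
  have hcast : ((b ^ k + m : ℕ) : ℤ) = (b : ℤ) ^ k + (m : ℤ) := by push_cast; ring
  by_cases hcond : (∀ d ∈ Nat.digits b m, d ≤ 1) ∧ (m : ℤ) % q = (i - (b : ℤ) ^ k) % q
  · rw [if_pos, if_pos hcond, hsum]
    · ring
    · exact ⟨hmem.mpr hcond.1, by rw [hcast]; exact hmod.mpr hcond.2⟩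
  · rw [if_neg, if_neg hcond]
    · ring
    · intro ⟨h1, h2⟩
      exact hcond ⟨hmem.mp h1, hmod.mp (by rw [← hcast]; exact h2)⟩
end

section
/- Let b ≥ 2 and q ≥ 1 be integers, i an integer, and N = b^{k₁} + b^{k₂} + ⋯ + b^{k_r} with k₁ > k₂ > ⋯ > k_r ≥ 0. Then S^{(b)}_{q,i}(N) = Σ_{j=1}^{r} (−1)^{j−1} S^{(b)}_{q, i − (b^{k₁} + ⋯ + b^{k_{j−1}})}(b^{k_j}). -/
lemma my_digits_len_le (b m n : ℕ) (hb : 2 ≤ b) (hn : n < b ^ m) :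
    (Nat.digits b n).length ≤ m := by
  rcases Nat.eq_zero_or_pos n with rfl | hpos
  · simp
  rw [Nat.digits_len b n (by omega) (by omega)]
  have := (Nat.log_lt_iff_lt_pow (by omega : 1 < b) (by omega : n ≠ 0)).mpr hn
  omega

lemma my_digits_pow_add (b m n : ℕ) (hb : 2 ≤ b) (hn : n < b ^ m) :
    Nat.digits b (b ^ m + n) =
      Nat.digits b n ++ List.replicate (m - (Nat.digits b n).length) 0 ++ [1] := by
  have hlen : (Nat.digits b n).length ≤ m := my_digits_len_le b m n hb hn
  have h1 : Nat.digits b 1 = [1] := by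
    rw [Nat.digits_def' (by omega : 1 < b) one_pos]
    simp [Nat.mod_eq_of_lt (by omega : 1 < b), Nat.div_eq_of_lt (by omega : 1 < b)]
  have := Nat.digits_append_zeroes_append_digits (b := b)
    (k := m - (Nat.digits b n).length) (m := 1) (n := n) (by omega) one_pos
  rw [h1] at this
  rw [this]
  congr 1
  have : (Nat.digits b n).length + (m - (Nat.digits b n).length) = m := by omega
  rw [this]
  ring

lemma newmanS_step (b q : ℕ) (hb : 2 ≤ b) (i : ℤ) (m N' : ℕ) (hN : N' ≤ b ^ m) :
    newmanS b q i (b ^ m + N') =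
      newmanS b q i (b ^ m) - newmanS b q (i - (b : ℤ) ^ m) N' := by
  unfold newmanS
  rw [Finset.sum_range_add, sub_eq_add_neg, ← Finset.sum_neg_distrib]
  congr 1
  apply Finset.sum_congr rfl
  intro x hx
  have hxlt : x < b ^ m := lt_of_lt_of_le (Finset.mem_range.mp hx) hN
  rw [my_digits_pow_add b m x hb hxlt]
  have hdig : (∀ d ∈ Nat.digits b x ++ List.replicate (m - (Nat.digits b x).length) 0 ++ [1],
      d ≤ 1) ↔ (∀ d ∈ Nat.digits b x, d ≤ 1) := by
    constructor
    · intro h d hd; exact h d (by simp [hd])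
    · intro h d hd
      simp only [List.mem_append, List.mem_replicate, List.mem_singleton] at hd
      rcases hd with (hd | hd) | hd
      · exact h d hd
      · omega
      · omega
  have hsum : (Nat.digits b x ++ List.replicate (m - (Nat.digits b x).length) 0 ++ [1]).sum
      = (Nat.digits b x).sum + 1 := by
    simp [List.sum_append]
  have hmod : ((b : ℤ) ^ m + (x : ℤ)) % q = i % q ↔ (x : ℤ) % q = (i - (b : ℤ) ^ m) % q := by
    constructor
    · intro h
      have := (Int.ModEq.sub_right ((b : ℤ) ^ m) (h : ((b : ℤ) ^ m + x) ≡ i [ZMOD q]))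
      simpa [add_comm, add_sub_cancel_left, Int.ModEq] using this
    · intro h
      have := (Int.ModEq.add_right ((b : ℤ) ^ m) (h : (x : ℤ) ≡ i - (b : ℤ) ^ m [ZMOD q]))
      simpa [sub_add_cancel, add_comm, Int.ModEq] using this
  push_cast
  simp only [hdig, hsum, hmod]
  by_cases hc : (∀ d ∈ Nat.digits b x, d ≤ 1) ∧ (x : ℤ) % q = (i - (b : ℤ) ^ m) % q
  · simp only [hc, and_true, pow_succ, pow_one, mul_neg_one]
    split <;> simp
  · simp [hc]

lemma sum_pow_lt (b : ℕ) (hb : 2 ≤ b) : ∀ (r M : ℕ) (k : Fin r → ℕ), StrictAnti k →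
    (∀ j, k j < M) → ∑ j : Fin r, b ^ k j < b ^ M := by
  intro r
  induction r with
  | zero =>
    intro M k hk hM
    simpa using pow_pos (by omega : 0 < b) M
  | succ r ih =>
    intro M k hk hM
    rw [Fin.sum_univ_succ]
    have h1 : ∑ j : Fin r, b ^ k j.succ < b ^ k 0 := by
      apply ih _ _ (fun j j' h => hk (by simpa using h))
      intro j
      exact hk (Fin.succ_pos j)
    have h2 : b ^ (k 0) + b ^ (k 0) ≤ b ^ M := by
      calc b ^ k 0 + b ^ k 0 ≤ b * b ^ k 0 := by nlinarith [pow_pos (by omega : 0 < b) (k 0)]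
        _ = b ^ (k 0 + 1) := by ring
        _ ≤ b ^ M := Nat.pow_le_pow_right (by omega) (by have := hM 0; omega)
    omega

lemma Iio_succ_sum {r : ℕ} (j : Fin r) (f : Fin (r + 1) → ℤ) :
    ∑ j' ∈ Finset.Iio j.succ, f j' = f 0 + ∑ j' ∈ Finset.Iio j, f j'.succ := by
  have : Finset.Iio j.succ =
      insert (0 : Fin (r + 1)) ((Finset.Iio j).map ⟨Fin.succ, Fin.succ_injective r⟩) := by
    ext x
    simp only [Finset.mem_Iio, Finset.mem_insert, Finset.mem_map, Function.Embedding.coeFn_mk]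
    constructor
    · intro hx
      rcases Fin.eq_zero_or_eq_succ x with rfl | ⟨y, rfl⟩
      · exact Or.inl rfl
      · exact Or.inr ⟨y, by simpa [Fin.succ_lt_succ_iff] using hx, rfl⟩
    · rintro (rfl | ⟨y, hy, rfl⟩)
      · exact Fin.succ_pos j
      · simpa [Fin.succ_lt_succ_iff] using hy
  rw [this, Finset.sum_insert (by simp [Fin.succ_ne_zero]), Finset.sum_map]
  rfl

theorem newmanS_sum_of_powers (b q : ℕ) (hb : 2 ≤ b) (hq : 1 ≤ q) (i : ℤ)
    (r : ℕ) (k : Fin r → ℕ) (hk : StrictAnti k) :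
    newmanS b q i (∑ j : Fin r, b ^ k j) =
      ∑ j : Fin r, (-1 : ℤ) ^ (j : ℕ) *
        newmanS b q (i - ∑ j' ∈ Finset.Iio j, (b : ℤ) ^ k j') (b ^ k j) := by
  induction r generalizing i with
  | zero => simp [newmanS]
  | succ r ih =>
    rw [Fin.sum_univ_succ, Fin.sum_univ_succ]
    have hlt : ∑ j : Fin r, b ^ k j.succ ≤ b ^ k 0 :=
      le_of_lt (sum_pow_lt b hb r (k 0) (fun j => k j.succ)
        (fun j j' h => hk (by simpa using h)) (fun j => hk (Fin.succ_pos j)))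
    rw [newmanS_step b q hb i (k 0) _ hlt,
      ih (i - (b : ℤ) ^ k 0) (fun j => k j.succ) (fun j j' h => hk (by simpa using h))]
    simp only [Fin.val_zero, pow_zero, one_mul]
    rw [sub_eq_add_neg]
    congr 1
    · congr 1
      have h0 : (Finset.Iio (0 : Fin (r + 1))) = ∅ := by
        ext x; simp
      simp [h0]
    rw [← Finset.sum_neg_distrib]
    apply Finset.sum_congr rfl
    intro j _
    rw [Iio_succ_sum j (fun j' => (b : ℤ) ^ k j')]
    push_cast
    ring_nf
    rw [Fin.val_succ, pow_succ]
    ring_nf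
end

section
/- Let b ≥ 2 and q ≥ 1 be integers, i an integer, and k a natural number. Then S^{(b)}_{q,i}(b^k) = (1/q) Σ_{m=0}^{q−1} ζ_q^{−im} Π_{p=0}^{k−1} (1 − ζ_q^{m b^p}), where ζ_q = e^{2πi/q} is a primitive q-th root of unity. -/
lemma digits_len_le_of_lt_pow {b r k : ℕ} (hb : 2 ≤ b) (hr : r < b ^ k) :
    (Nat.digits b r).length ≤ k := by
  rcases Nat.eq_zero_or_pos r with rfl | hr0
  · simp
  by_contra h
  push_neg at h
  have h1 : b ^ (Nat.digits b r).length ≤ b * r :=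
    Nat.base_pow_length_digits_le b r (by omega) (by omega)
  have h2 : b ^ (k + 1) ≤ b ^ (Nat.digits b r).length :=
    Nat.pow_le_pow_right (by omega) h
  have : b ^ k ≤ r := by
    have := h2.trans h1
    rw [pow_succ, mul_comm] at this
    exact Nat.le_of_mul_le_mul_left this (by omega)
  omega

lemma digits_mul_pow_add {b a k r : ℕ} (hb : 2 ≤ b) (ha0 : 0 < a) (hab : a < b)
    (hr : r < b ^ k) :
    Nat.digits b (a * b ^ k + r) =
      Nat.digits b r ++ List.replicate (k - (Nat.digits b r).length) 0 ++ [a] := by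
  have hlen := digits_len_le_of_lt_pow hb hr
  have hda : Nat.digits b a = [a] := by
    rw [Nat.digits_def' (by omega : 1 < b) ha0, Nat.mod_eq_of_lt hab,
      Nat.div_eq_of_lt hab]
    simp
  rw [← hda, Nat.digits_append_zeroes_append_digits (by omega : 1 < b) ha0]
  congr 1
  have : (Nat.digits b r).length + (k - (Nat.digits b r).length) = k := by omega
  rw [this]
  ring

lemma prod_eq_sum_A {b : ℕ} (hb : 2 ≤ b) (x : ℂ) (k : ℕ) :
    ∏ p ∈ Finset.range k, (1 - x ^ b ^ p) =
      ∑ n ∈ Finset.range (b ^ k),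
        if ∀ d ∈ Nat.digits b n, d ≤ 1 then
          (-1 : ℂ) ^ (Nat.digits b n).sum * x ^ n else 0 := by
  induction k with
  | zero => simp
  | succ k ih =>
    have hsplit : ∑ n ∈ Finset.range (b ^ (k + 1)),
        (if ∀ d ∈ Nat.digits b n, d ≤ 1 then
          (-1 : ℂ) ^ (Nat.digits b n).sum * x ^ n else 0) =
        ∑ a ∈ Finset.range b, ∑ r ∈ Finset.range (b ^ k),
        (if ∀ d ∈ Nat.digits b (a * b ^ k + r), d ≤ 1 then
          (-1 : ℂ) ^ (Nat.digits b (a * b ^ k + r)).sum * x ^ (a * b ^ k + r) else 0) := by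
      rw [← Finset.sum_product']
      apply Finset.sum_nbij' (fun n => (n / b ^ k, n % b ^ k))
        (fun p => p.1 * b ^ k + p.2)
      · intro n hn
        simp only [Finset.mem_range, Finset.mem_product] at hn ⊢
        have hbk : 0 < b ^ k := Nat.pow_pos (by omega)
        constructor
        · rw [pow_succ] at hn
          exact Nat.div_lt_of_lt_mul (by omega)
        · exact Nat.mod_lt _ hbk
      · intro p hp
        simp only [Finset.mem_range, Finset.mem_product] at hp ⊢
        rw [pow_succ]
        calc p.1 * b ^ k + p.2 < p.1 * b ^ k + b ^ k := by omega
        _ = (p.1 + 1) * b ^ k := by ring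
        _ ≤ b * b ^ k := Nat.mul_le_mul_right _ (by omega)
        _ = b ^ k * b := by ring
      · intro n _
        exact (Nat.div_add_mod' n (b ^ k)).symm ▸ rfl
      · intro p hp
        simp only [Finset.mem_range, Finset.mem_product] at hp
        have hbk : 0 < b ^ k := Nat.pow_pos (by omega)
        rw [add_comm, mul_comm, Nat.add_mul_div_left _ _ hbk, Nat.add_mul_mod_self_left,
          Nat.div_eq_of_lt hp.2, Nat.mod_eq_of_lt hp.2]
        simp
      · intro n _
        rw [Nat.div_add_mod' n (b ^ k)]
    rw [Finset.prod_range_succ, ih, hsplit]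
    have hbk : 0 < b ^ k := Nat.pow_pos (by omega)
    rw [Finset.range_eq_Ico b,
      ← Finset.sum_Ico_consecutive _ (by omega : (0:ℕ) ≤ 2) (by omega : 2 ≤ b),
      ← Finset.range_eq_Ico]
    have hrest : ∑ a ∈ Finset.Ico 2 b, ∑ r ∈ Finset.range (b ^ k),
        (if ∀ d ∈ Nat.digits b (a * b ^ k + r), d ≤ 1 then
          (-1 : ℂ) ^ (Nat.digits b (a * b ^ k + r)).sum * x ^ (a * b ^ k + r) else 0) = 0 := by
      apply Finset.sum_eq_zero
      intro a ha
      simp only [Finset.mem_Ico] at ha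
      apply Finset.sum_eq_zero
      intro r hr
      simp only [Finset.mem_range] at hr
      rw [if_neg]
      intro h
      have := h a (by
        rw [digits_mul_pow_add hb (by omega) ha.2 hr]
        simp)
      omega
    rw [hrest, add_zero, Finset.sum_range_succ, Finset.sum_range_one]
    have h0 : ∑ r ∈ Finset.range (b ^ k),
        (if ∀ d ∈ Nat.digits b (0 * b ^ k + r), d ≤ 1 then
          (-1 : ℂ) ^ (Nat.digits b (0 * b ^ k + r)).sum * x ^ (0 * b ^ k + r) else 0) =
        ∑ n ∈ Finset.range (b ^ k),
        (if ∀ d ∈ Nat.digits b n, d ≤ 1 then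
          (-1 : ℂ) ^ (Nat.digits b n).sum * x ^ n else 0) := by
      simp only [zero_mul, zero_add]
    have h1 : ∑ r ∈ Finset.range (b ^ k),
        (if ∀ d ∈ Nat.digits b (1 * b ^ k + r), d ≤ 1 then
          (-1 : ℂ) ^ (Nat.digits b (1 * b ^ k + r)).sum * x ^ (1 * b ^ k + r) else 0) =
        (-(x ^ b ^ k)) * ∑ n ∈ Finset.range (b ^ k),
        (if ∀ d ∈ Nat.digits b n, d ≤ 1 then
          (-1 : ℂ) ^ (Nat.digits b n).sum * x ^ n else 0) := by
      rw [Finset.mul_sum]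
      apply Finset.sum_congr rfl
      intro r hr
      simp only [Finset.mem_range] at hr
      have hd := digits_mul_pow_add hb one_pos (by omega : 1 < b) hr
      have hcond : (∀ d ∈ Nat.digits b (1 * b ^ k + r), d ≤ 1) ↔
          (∀ d ∈ Nat.digits b r, d ≤ 1) := by
        rw [hd]
        constructor
        · intro h d hdm
          exact h d (by simp [hdm])
        · intro h d hdm
          simp only [List.mem_append, List.mem_singleton] at hdm
          rcases hdm with (hdm | hdm) | hdm
          · exact h d hdm
          · rw [List.eq_of_mem_replicate hdm]
            omega
          · omega
      have hsum : (Nat.digits b (1 * b ^ k + r)).sum = (Nat.digits b r).sum + 1 := by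
        rw [hd, List.sum_append, List.sum_append, List.sum_replicate]
        simp
      simp only [one_mul] at hcond hsum ⊢
      rw [hsum]
      by_cases hc : ∀ d ∈ Nat.digits b r, d ≤ 1
      · rw [if_pos (hcond.mpr hc), if_pos hc, pow_succ, pow_add]
        ring
      · rw [if_neg (fun h => hc (hcond.mp h)), if_neg hc, mul_zero]
    rw [h0, h1]
    ring


lemma zeta_pow_q {q : ℕ} (hq : 1 ≤ q) :
    Complex.exp (2 * Real.pi * Complex.I / q) ^ (q : ℕ) = 1 := by
  have hq0 : (q : ℂ) ≠ 0 := Nat.cast_ne_zero.mpr (by omega)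
  have h : (q : ℂ) * (2 * Real.pi * Complex.I / q) = 2 * Real.pi * Complex.I := by
    field_simp
  rw [← Complex.exp_nat_mul, h, Complex.exp_two_pi_mul_I]

lemma zeta_ne_zero (q : ℕ) : Complex.exp (2 * Real.pi * Complex.I / q) ≠ 0 :=
  Complex.exp_ne_zero _

lemma orth {q : ℕ} (hq : 1 ≤ q) (j : ℤ) :
    ∑ m ∈ Finset.range q, Complex.exp (2 * Real.pi * Complex.I / q) ^ (j * (m : ℤ)) =
      if (q : ℤ) ∣ j then (q : ℂ) else 0 := by
  set ζ := Complex.exp (2 * Real.pi * Complex.I / q) with hζ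
  have hζ0 : ζ ≠ 0 := Complex.exp_ne_zero _
  have hq0 : (q : ℂ) ≠ 0 := Nat.cast_ne_zero.mpr (by omega)
  have hterm : ∀ m : ℕ, ζ ^ (j * (m : ℤ)) = (ζ ^ j) ^ m := by
    intro m
    rw [zpow_mul, zpow_natCast]
  simp only [hterm]
  have hkey : ζ ^ j = 1 ↔ (q : ℤ) ∣ j := by
    rw [hζ, ← Complex.exp_int_mul, Complex.exp_eq_one_iff]
    constructor
    · rintro ⟨n, hn⟩
      refine ⟨n, ?_⟩
      have h2 : (2 * Real.pi * Complex.I : ℂ) ≠ 0 := by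
        simp [Real.pi_ne_zero, Complex.I_ne_zero]
      have hc : (j : ℂ) = n * q := by
        field_simp at hn
        apply mul_right_cancel₀ h2
        rw [hn]
        ring
      have : j = n * q := by exact_mod_cast hc
      rw [this]
      ring
    · rintro ⟨n, rfl⟩
      exact ⟨n, by push_cast; field_simp⟩
  by_cases hd : (q : ℤ) ∣ j
  · rw [if_pos hd]
    simp [hkey.mpr hd]
  · rw [if_neg hd]
    have hne : ζ ^ j ≠ 1 := fun h => hd (hkey.mp h)
    rw [geom_sum_eq hne]
    have : (ζ ^ j) ^ q = 1 := by
      rw [← zpow_natCast (ζ ^ j), ← zpow_mul, mul_comm, zpow_mul, zpow_natCast,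
        zeta_pow_q hq, one_zpow]
    rw [this, sub_self, zero_div]

theorem newmanS_pow_eq_root_of_unity_sum (b q : ℕ) (hb : 2 ≤ b) (hq : 1 ≤ q)
    (i : ℤ) (k : ℕ) :
    (newmanS b q i (b ^ k) : ℂ) =
      (q : ℂ)⁻¹ * ∑ m ∈ Finset.range q,
        Complex.exp (2 * Real.pi * Complex.I / q) ^ (-(i * m)) *
          ∏ p ∈ Finset.range k,
            (1 - Complex.exp (2 * Real.pi * Complex.I / q) ^ (m * b ^ p)) := by
  set ζ := Complex.exp (2 * Real.pi * Complex.I / q) with hζ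
  have hζ0 : ζ ≠ 0 := Complex.exp_ne_zero _
  have hq0 : (q : ℂ) ≠ 0 := Nat.cast_ne_zero.mpr (by omega)
  have hprod : ∀ m : ℕ, ∏ p ∈ Finset.range k, (1 - ζ ^ (m * b ^ p)) =
      ∑ n ∈ Finset.range (b ^ k),
        (if ∀ d ∈ Nat.digits b n, d ≤ 1 then
          (-1 : ℂ) ^ (Nat.digits b n).sum * (ζ ^ m) ^ n else 0) := by
    intro m
    rw [← prod_eq_sum_A hb (ζ ^ m) k]
    exact Finset.prod_congr rfl fun p _ => by rw [pow_mul]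
  have hterm : ∀ m n : ℕ,
      ζ ^ (-(i * (m : ℤ))) * (if ∀ d ∈ Nat.digits b n, d ≤ 1 then
          (-1 : ℂ) ^ (Nat.digits b n).sum * (ζ ^ m) ^ n else 0) =
      (if ∀ d ∈ Nat.digits b n, d ≤ 1 then
          (-1 : ℂ) ^ (Nat.digits b n).sum * ζ ^ (((n : ℤ) - i) * (m : ℤ)) else 0) := by
    intro m n
    split_ifs with hc
    · have h1 : (ζ ^ m) ^ n = ζ ^ ((m * n : ℕ) : ℤ) := by
        rw [zpow_natCast, pow_mul]
      rw [h1, mul_comm (ζ ^ (-(i * (m : ℤ)))), mul_assoc, ← zpow_add₀ hζ0]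
      congr 2
      push_cast
      ring
    · rw [mul_zero]
  calc (newmanS b q i (b ^ k) : ℂ)
      = ∑ n ∈ Finset.range (b ^ k),
        (if (∀ d ∈ Nat.digits b n, d ≤ 1) ∧ (n : ℤ) % q = i % q
          then (-1 : ℂ) ^ (Nat.digits b n).sum else 0) := by
        rw [newmanS]
        push_cast [apply_ite (fun z : ℤ => (z : ℂ))]
        rfl
    _ = ∑ n ∈ Finset.range (b ^ k), (q : ℂ)⁻¹ *
        (if ∀ d ∈ Nat.digits b n, d ≤ 1 then
          (-1 : ℂ) ^ (Nat.digits b n).sum *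
            (if ((q : ℤ)) ∣ ((n : ℤ) - i) then (q : ℂ) else 0) else 0) := by
        apply Finset.sum_congr rfl
        intro n _
        have hmod : ((n : ℤ) % q = i % q) ↔ ((q : ℤ) ∣ ((n : ℤ) - i)) := by
          rw [Int.emod_eq_emod_iff_emod_sub_eq_zero]
          exact ⟨fun h => Int.dvd_of_emod_eq_zero h, fun h => Int.emod_eq_zero_of_dvd h⟩
        by_cases hc : ∀ d ∈ Nat.digits b n, d ≤ 1
        · by_cases hm : ((q : ℤ)) ∣ ((n : ℤ) - i)
          · rw [if_pos ⟨hc, hmod.mpr hm⟩, if_pos hc, if_pos hm]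
            field_simp
          · rw [if_neg (fun h => hm (hmod.mp h.2)), if_pos hc, if_neg hm, mul_zero, mul_zero]
        · rw [if_neg (fun h => hc h.1), if_neg hc, mul_zero]
    _ = (q : ℂ)⁻¹ * ∑ n ∈ Finset.range (b ^ k),
        (if ∀ d ∈ Nat.digits b n, d ≤ 1 then
          (-1 : ℂ) ^ (Nat.digits b n).sum *
            ∑ m ∈ Finset.range q, ζ ^ (((n : ℤ) - i) * (m : ℤ)) else 0) := by
        rw [Finset.mul_sum]
        apply Finset.sum_congr rfl
        intro n _
        rw [orth hq ((n : ℤ) - i)]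
    _ = (q : ℂ)⁻¹ * ∑ n ∈ Finset.range (b ^ k), ∑ m ∈ Finset.range q,
        (if ∀ d ∈ Nat.digits b n, d ≤ 1 then
          (-1 : ℂ) ^ (Nat.digits b n).sum * ζ ^ (((n : ℤ) - i) * (m : ℤ)) else 0) := by
        congr 1
        apply Finset.sum_congr rfl
        intro n _
        split_ifs with hc
        · rw [Finset.mul_sum]
        · rw [Finset.sum_const, smul_zero]
    _ = (q : ℂ)⁻¹ * ∑ m ∈ Finset.range q,
        ζ ^ (-(i * m)) * ∏ p ∈ Finset.range k, (1 - ζ ^ (m * b ^ p)) := by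
        rw [Finset.sum_comm]
        congr 1
        apply Finset.sum_congr rfl
        intro m _
        rw [hprod, Finset.mul_sum]
        apply Finset.sum_congr rfl
        intro n _
        exact (hterm m n).symm
end
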